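/- Let D₁ be an annotation domain that is a lattice and D₂ an annotation domain. For a finite set A ⊆ L₁ × L₂, elements (a,b), (c,d) ∈ A, and any z ∈ L₁, the induced function satisfies: the set A ∪ {(a ⊕₁ c, b ⊗₂ d)} induces the same function as A, i.e., for all z, Ā(z) = (A ∪ {(a ⊕₁ c, b ⊗₂ d)})‾(z). -/

import Mathlib

/-- An annotation domain: an idempotent commutative semiring
`(L, ⊕, ⊗, ⊥, ⊤)` in which `⊕` is `⊤`-annihilating. -/
structure AnnDom (L : Type*) where
  oplus : L → L → L
  otimes : L → L → L
  bot : L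
  top : L
  oplus_idem : ∀ a, oplus a a = a
  oplus_comm : ∀ a b, oplus a b = oplus b a
  oplus_assoc : ∀ a b c, oplus (oplus a b) c = oplus a (oplus b c)
  otimes_comm : ∀ a b, otimes a b = otimes b a
  otimes_assoc : ∀ a b c, otimes (otimes a b) c = otimes a (otimes b c)
  bot_oplus : ∀ a, oplus bot a = a
  top_otimes : ∀ a, otimes top a = a
  bot_otimes : ∀ a, otimes bot a = bot
  top_oplus : ∀ a, oplus top a = top
  otimes_distrib : ∀ a b c, otimes a (oplus b c) = oplus (otimes a b) (otimes a c)

/-- The induced order: `a ⪯ b` iff `a ⊕ b = b`. -/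
def AnnDom.le {L : Type*} (D : AnnDom L) (a b : L) : Prop := D.oplus a b = b


/-- The annotation domain is a lattice: `⊗` is the greatest lower bound of
the induced order `⪯`. -/
def AnnDom.IsLattice {L : Type*} (D : AnnDom L) : Prop :=
  ∀ a b c, (D.le c a ∧ D.le c b) ↔ D.le c (D.otimes a b)


open Classical in
/-- The join `⊕₁` of the first coordinates of the pairs in `J` (`⊥₁` if empty). -/
noncomputable def joinFst {L1 L2 : Type*} (D1 : AnnDom L1) (J : Finset (L1 × L2)) : L1 :=
  haveI : Std.Commutative D1.oplus := ⟨D1.oplus_comm⟩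
  haveI : Std.Associative D1.oplus := ⟨D1.oplus_assoc⟩
  J.fold D1.oplus D1.bot Prod.fst

open Classical in
/-- `K^A_z = {J ⊆ A | z ⪯₁ ⊕₁_{(x,y)∈J} x}`. -/
noncomputable def Kset {L1 L2 : Type*} (D1 : AnnDom L1) (A : Finset (L1 × L2))
    (z : L1) : Finset (Finset (L1 × L2)) :=
  A.powerset.filter (fun J => D1.le z (joinFst D1 J))

open Classical in
/-- `Ā(z) = ⊕₂_{J ∈ K^A_z} (⊗₂_{(x,y)∈J} y)` (empty join is `⊥₂`, empty
product is `⊤₂`). -/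
noncomputable def Abar {L1 L2 : Type*} (D1 : AnnDom L1) (D2 : AnnDom L2)
    (A : Finset (L1 × L2)) (z : L1) : L2 :=
  haveI : Std.Commutative D2.oplus := ⟨D2.oplus_comm⟩
  haveI : Std.Associative D2.oplus := ⟨D2.oplus_assoc⟩
  haveI : Std.Commutative D2.otimes := ⟨D2.otimes_comm⟩
  haveI : Std.Associative D2.otimes := ⟨D2.otimes_assoc⟩
  (Kset D1 A z).fold D2.oplus D2.bot (fun J => J.fold D2.otimes D2.top Prod.snd)


section FoldAux
variable {α β : Type*} [DecidableEq α] (op : β → β → β) (b0 : β) (f : α → β)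
variable [Std.Commutative op] [Std.Associative op]

theorem myop_left_comm (x y z : β) : op x (op y z) = op y (op x z) := by
  rw [← Std.Associative.assoc (op := op), Std.Commutative.comm (op := op) x y,
    Std.Associative.assoc (op := op)]

theorem myabsorb_of_mem (S : Finset α) (x : α) (hx : x ∈ S) (t : β)
    (ht : op t (f x) = f x) :
    op t (S.fold op b0 f) = S.fold op b0 f := by
  have h : S = insert x (S.erase x) := (Finset.insert_erase hx).symm
  rw [h, Finset.fold_insert (Finset.notMem_erase _ _),
    ← Std.Associative.assoc (op := op), ht]

theorem myfold_absorb_all (t : β) (u : Finset α) (hb : op b0 t = t)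
    (h : ∀ x ∈ u, op (f x) t = t) : op (u.fold op b0 f) t = t := by
  induction u using Finset.induction_on with
  | empty => simpa using hb
  | @insert a s ha ih =>
      rw [Finset.fold_insert ha, Std.Associative.assoc (op := op),
        ih (fun x hx => h x (Finset.mem_insert_of_mem hx)),
        h a (Finset.mem_insert_self a s)]

theorem myfold_union_disjoint (hb : ∀ x, op b0 x = x) (s t : Finset α)
    (h : Disjoint s t) :
    (s ∪ t).fold op b0 f = op (s.fold op b0 f) (t.fold op b0 f) := by
  induction t using Finset.induction_on with
  | empty => rw [Finset.union_empty, Finset.fold_empty,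
      Std.Commutative.comm (op := op), hb]
  | @insert a u ha ih =>
      have hau : a ∉ u := ha
      have haS : a ∉ s := Finset.disjoint_right.mp h (Finset.mem_insert_self a u)
      have hd : Disjoint s u := h.mono_right (Finset.subset_insert a u)
      have has : a ∉ s ∪ u := by
        simp only [Finset.mem_union, not_or]; exact ⟨haS, hau⟩
      rw [Finset.union_insert, Finset.fold_insert has, ih hd,
        Finset.fold_insert hau]
      exact myop_left_comm op _ _ _

theorem myfold_subset (S T : Finset α) (hST : S ⊆ T) (hb : ∀ x, op b0 x = x)
    (habs : ∀ J ∈ T, J ∉ S → op (f J) (S.fold op b0 f) = S.fold op b0 f) :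
    T.fold op b0 f = S.fold op b0 f := by
  have hT : T = S ∪ (T \ S) := by
    rw [Finset.union_sdiff_self_eq_union, Finset.union_eq_right.mpr hST]
  rw [hT, myfold_union_disjoint op b0 f hb _ _ Finset.disjoint_sdiff,
    Std.Commutative.comm (op := op)]
  exact myfold_absorb_all op b0 f _ _ (hb _)
    (fun x hx => habs x (Finset.mem_sdiff.mp hx).1 (Finset.mem_sdiff.mp hx).2)

end FoldAux

namespace AnnDom
variable {L : Type*} (D : AnnDom L)

theorem myle_refl (x : L) : D.le x x := D.oplus_idem x

theorem myle_trans {x y z : L} (h1 : D.le x y) (h2 : D.le y z) : D.le x z := by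
  unfold AnnDom.le at *
  rw [← h2, ← D.oplus_assoc, h1]

theorem myotimes_le_right (y x : L) : D.le (D.otimes y x) x := by
  unfold AnnDom.le
  calc D.oplus (D.otimes y x) x
      = D.oplus (D.otimes x y) (D.otimes x D.top) := by
        rw [D.otimes_comm y x, D.otimes_comm x D.top, D.top_otimes]
    _ = D.otimes x (D.oplus y D.top) := (D.otimes_distrib x y D.top).symm
    _ = x := by rw [D.oplus_comm, D.top_oplus, D.otimes_comm, D.top_otimes]

theorem myotimes_le_otimes (t : L) {u v : L} (h : D.le u v) :
    D.le (D.otimes t u) (D.otimes t v) := by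
  unfold AnnDom.le at *
  rw [← D.otimes_distrib, h]

end AnnDom

section KAux
open Classical
variable {L1 L2 : Type*} (D1 : AnnDom L1) (D2 : AnnDom L2)

theorem mymem_Kset {A : Finset (L1 × L2)} {z : L1} {J : Finset (L1 × L2)} :
    J ∈ Kset D1 A z ↔ J ⊆ A ∧ D1.le z (joinFst D1 J) := by
  unfold Kset
  rw [Finset.mem_filter, Finset.mem_powerset]

theorem myjoinFst_insert (p : L1 × L2) (J : Finset (L1 × L2)) :
    joinFst D1 (insert p J) = D1.oplus p.1 (joinFst D1 J) := by
  classical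
  haveI : Std.Commutative D1.oplus := ⟨D1.oplus_comm⟩
  haveI : Std.Associative D1.oplus := ⟨D1.oplus_assoc⟩
  haveI : Std.IdempotentOp D1.oplus := ⟨D1.oplus_idem⟩
  unfold joinFst
  exact Finset.fold_insert_idem

noncomputable def prodSnd (J : Finset (L1 × L2)) : L2 :=
  haveI : Std.Commutative D2.otimes := ⟨D2.otimes_comm⟩
  haveI : Std.Associative D2.otimes := ⟨D2.otimes_assoc⟩
  J.fold D2.otimes D2.top Prod.snd

theorem myprodSnd_insert_of_not_mem {p : L1 × L2} {J : Finset (L1 × L2)}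
    (h : p ∉ J) : prodSnd D2 (insert p J) = D2.otimes p.2 (prodSnd D2 J) := by
  classical
  haveI : Std.Commutative D2.otimes := ⟨D2.otimes_comm⟩
  haveI : Std.Associative D2.otimes := ⟨D2.otimes_assoc⟩
  unfold prodSnd
  exact Finset.fold_insert h

theorem myprodSnd_insert_le (p : L1 × L2) (J : Finset (L1 × L2)) :
    D2.le (D2.otimes p.2 (prodSnd D2 J)) (prodSnd D2 (insert p J)) := by
  classical
  by_cases h : p ∈ J
  · rw [Finset.insert_eq_self.mpr h]
    exact D2.myotimes_le_right p.2 (prodSnd D2 J)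
  · rw [myprodSnd_insert_of_not_mem D2 h]
    exact D2.myle_refl _

end KAux

open Classical
/-- Adding the pair `(a ⊕₁ c, b ⊗₂ d)` for `(a,b), (c,d) ∈ A` does not
change the induced function: `Ā = (A ∪ {(a ⊕₁ c, b ⊗₂ d)})‾`. -/
theorem stmt17 {L1 L2 : Type*} (D1 : AnnDom L1) (D2 : AnnDom L2)
    (hL : D1.IsLattice) (A : Finset (L1 × L2)) (a c : L1) (b d : L2)
    (hab : (a, b) ∈ A) (hcd : (c, d) ∈ A) :
    ∀ z : L1, Abar D1 D2 A z
      = Abar D1 D2 (insert (D1.oplus a c, D2.otimes b d) A) z := by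
    classical
  haveI : Std.Commutative D2.oplus := ⟨D2.oplus_comm⟩
  haveI : Std.Associative D2.oplus := ⟨D2.oplus_assoc⟩
  intro z
  set e : L1 × L2 := (D1.oplus a c, D2.otimes b d) with he
  by_cases heA : e ∈ A
  · rw [Finset.insert_eq_self.mpr heA]
  unfold Abar
  refine (myfold_subset D2.oplus D2.bot _ (Kset D1 A z)
    (Kset D1 (insert e A) z) ?_ D2.bot_oplus ?_).symm
  · intro J hJ
    rw [mymem_Kset] at hJ ⊢
    exact ⟨hJ.1.trans (Finset.subset_insert e A), hJ.2⟩
  · intro J hJ hJS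
    rw [mymem_Kset] at hJ hJS
    push_neg at hJS
    have heJ : e ∈ J := by
      by_contra heJ
      have hJA : J ⊆ A := fun x hx =>
        (Finset.mem_insert.mp (hJ.1 hx)).resolve_left (fun hxe => heJ (hxe ▸ hx))
      exact absurd hJ.2 (hJS hJA)
    set J0 := J.erase e with hJ0
    have heJ0 : e ∉ J0 := Finset.notMem_erase e J
    have hJeq : J = insert e J0 := (Finset.insert_erase heJ).symm
    set J1 : Finset (L1 × L2) := insert (a, b) (insert (c, d) J0) with hJ1
    have hJ1A : J1 ⊆ A := by
      rw [hJ1]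
      refine Finset.insert_subset hab (Finset.insert_subset hcd ?_)
      exact Finset.subset_insert_iff.mp hJ.1
    have hjoin : joinFst D1 J1 = joinFst D1 J := by
      rw [hJeq, hJ1, myjoinFst_insert, myjoinFst_insert, myjoinFst_insert]
      simp only [he]
      rw [← D1.oplus_assoc]
    have hJ1K : J1 ∈ Kset D1 A z := by
      rw [mymem_Kset]
      exact ⟨hJ1A, hjoin ▸ hJ.2⟩
    have hle : D2.le (prodSnd D2 J) (prodSnd D2 J1) := by
      have h1 : prodSnd D2 J = D2.otimes b (D2.otimes d (prodSnd D2 J0)) := by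
        rw [hJeq, myprodSnd_insert_of_not_mem D2 heJ0]
        simp only [he]
        rw [D2.otimes_assoc]
      rw [h1]
      refine D2.myle_trans (D2.myotimes_le_otimes b
        (myprodSnd_insert_le D2 (c, d) J0)) ?_
      exact myprodSnd_insert_le D2 (a, b) (insert (c, d) J0)
    exact myabsorb_of_mem D2.oplus D2.bot _ (Kset D1 A z) J1 hJ1K _ hle
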